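/- Let d ≥ 4 and l ≥ 2 be integers with d ≥ 3l-2. Then there is a unique tuple of complex numbers (b_0, …, b_{l-2}, a_{d-l+1}, …, a_d) such that the polynomial p(z) = b_0 + b_1 z + ⋯ + b_{l-2} z^{l-2} + z^{l-1} + a_{d-l+1} z^{d-l+1} + ⋯ + a_d z^d is divisible by (z-1)^{2l-1}. -/

import Mathlib

open Polynomial

/-- A nonzero complex polynomial has root multiplicity at `1` less than the number
of its nonzero terms. -/
lemma rootMultiplicity_one_lt_card_support (p : ℂ[X]) (hp : p ≠ 0) :
    p.rootMultiplicity 1 < p.support.card := by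
  generalize hn : p.support.card = n
  induction n using Nat.strong_induction_on generalizing p with
  | _ n ih =>
    have hne : p.support.Nonempty := Polynomial.nonempty_support_iff.mpr hp
    have hn1 : 1 ≤ n := by
      have := Finset.card_pos.mpr hne; omega
    by_cases hm : p.rootMultiplicity 1 = 0
    · omega
    have hroot : p.IsRoot 1 := by
      by_contra h
      exact hm (Polynomial.rootMultiplicity_eq_zero h)
    obtain ⟨c, hc⟩ := hne
    set m := p.rootMultiplicity 1 with hmdef
    set q : ℂ[X] := X * derivative p - C (c : ℂ) * p with hq
    have hcoeff : ∀ k : ℕ, q.coeff k = ((k : ℂ) - c) * p.coeff k := by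
      intro k
      cases k with
      | zero => simp [hq, Polynomial.mul_coeff_zero]
      | succ k =>
        rw [hq, Polynomial.coeff_sub, Polynomial.coeff_X_mul, Polynomial.coeff_derivative,
          Polynomial.coeff_C_mul]
        push_cast
        ring
    have hsub : q.support ⊆ p.support.erase c := by
      intro k hk
      rw [Polynomial.mem_support_iff] at hk
      rw [Finset.mem_erase, Polynomial.mem_support_iff]
      constructor
      · rintro rfl
        simp [hcoeff k] at hk
      · intro h
        exact hk (by rw [hcoeff k, h, mul_zero])
    have hq0 : q ≠ 0 := by
      intro h0
      have hall : ∀ k : ℕ, k ≠ c → p.coeff k = 0 := by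
        intro k hkc
        have := hcoeff k
        rw [h0, Polynomial.coeff_zero] at this
        have hne' : ((k : ℂ) - c) ≠ 0 := by
          intro h
          exact hkc (Nat.cast_injective (by linear_combination (h : ((k:ℂ) - c) = 0)))
        exact (mul_eq_zero.mp this.symm).resolve_left hne'
      have hsupp : p.support = {c} := by
        apply Finset.eq_singleton_iff_unique_mem.mpr
        refine ⟨hc, fun k hk => ?_⟩
        by_contra hkc
        exact (Polynomial.mem_support_iff.mp hk) (hall k hkc)
      have heval : p.eval 1 = p.coeff c := by
        rw [Polynomial.eval_eq_sum, Polynomial.sum_def, hsupp, Finset.sum_singleton, one_pow,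
          mul_one]
      rw [Polynomial.IsRoot, heval] at hroot
      exact (Polynomial.mem_support_iff.mp hc) hroot
    have hdvd : (X - C (1 : ℂ)) ^ (m - 1) ∣ q := by
      have h1 : (X - C (1 : ℂ)) ^ (m - 1) ∣ derivative p := by
        have h2 := Polynomial.pow_rootMultiplicity_dvd (derivative p) 1
        rwa [Polynomial.derivative_rootMultiplicity_of_root hroot] at h2
      have h3 : (X - C (1 : ℂ)) ^ (m - 1) ∣ p :=
        dvd_trans (pow_dvd_pow _ (Nat.sub_le m 1)) (Polynomial.pow_rootMultiplicity_dvd p 1)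
      exact dvd_sub (Dvd.dvd.mul_left h1 X) (Dvd.dvd.mul_left h3 (C (c : ℂ)))
    have hle : m - 1 ≤ q.rootMultiplicity 1 := (Polynomial.le_rootMultiplicity_iff hq0).mpr hdvd
    have hcard : q.support.card ≤ n - 1 := by
      calc q.support.card ≤ (p.support.erase c).card := Finset.card_le_card hsub
        _ = p.support.card - 1 := Finset.card_erase_of_mem hc
        _ = n - 1 := by rw [hn]
    have hlt : q.rootMultiplicity 1 < q.support.card :=
      ih q.support.card (by omega) q hq0 rfl
    omega


/-- The linear map sending coefficient tuples to the corresponding polynomial. -/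
noncomputable def Qmap (d l : ℕ) : ((Fin (l - 1) → ℂ) × (Fin l → ℂ)) →ₗ[ℂ] ℂ[X] where
  toFun ba := (∑ i : Fin (l - 1), C (ba.1 i) * X ^ (i : ℕ)) +
      ∑ i : Fin l, C (ba.2 i) * X ^ (d - l + 1 + (i : ℕ))
  map_add' x y := by
    simp only [Prod.fst_add, Prod.snd_add, Pi.add_apply, C_add, add_mul,
      Finset.sum_add_distrib]
    ring
  map_smul' r x := by
    simp only [Prod.smul_fst, Prod.smul_snd, Pi.smul_apply, smul_eq_mul, C_mul,
      RingHom.id_apply, Polynomial.smul_eq_C_mul, mul_assoc]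
    rw [mul_add, Finset.mul_sum, Finset.mul_sum]

lemma Qmap_coeff_lt (d l : ℕ) (hl : 2 ≤ l) (hdl : 3 * l - 2 ≤ d)
    (ba : (Fin (l - 1) → ℂ) × (Fin l → ℂ)) (j : Fin (l - 1)) :
    (Qmap d l ba).coeff (j : ℕ) = ba.1 j := by
  have hj : (j : ℕ) < l - 1 := j.isLt
  simp only [Qmap, LinearMap.coe_mk, AddHom.coe_mk, coeff_add, finset_sum_coeff,
    coeff_C_mul, coeff_X_pow]
  rw [Finset.sum_eq_single j, Finset.sum_eq_zero]
  · simp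
  · intro i _
    have : (j : ℕ) ≠ d - l + 1 + (i : ℕ) := by omega
    simp [this]
  · intro i _ hij
    have : (j : ℕ) ≠ (i : ℕ) := fun h => hij (Fin.ext h.symm)
    simp [this]
  · simp

lemma Qmap_coeff_ge (d l : ℕ) (hl : 2 ≤ l) (hdl : 3 * l - 2 ≤ d)
    (ba : (Fin (l - 1) → ℂ) × (Fin l → ℂ)) (j : Fin l) :
    (Qmap d l ba).coeff (d - l + 1 + (j : ℕ)) = ba.2 j := by
  simp only [Qmap, LinearMap.coe_mk, AddHom.coe_mk, coeff_add, finset_sum_coeff,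
    coeff_C_mul, coeff_X_pow]
  rw [Finset.sum_eq_zero, Finset.sum_eq_single j]
  · simp
  · intro i _ hij
    have : d - l + 1 + (j : ℕ) ≠ d - l + 1 + (i : ℕ) := by
      intro h
      exact hij (Fin.ext (by omega))
    simp [this, show (j : ℕ) ≠ (i : ℕ) from fun h => hij (Fin.ext h.symm)]
  · simp
  · intro i _
    have hi : (i : ℕ) < l - 1 := i.isLt
    have : d - l + 1 + (j : ℕ) ≠ (i : ℕ) := by omega
    simp [this]

lemma Qmap_card_support (d l : ℕ) (ba : (Fin (l - 1) → ℂ) × (Fin l → ℂ)) :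
    (Qmap d l ba).support.card ≤ (l - 1) + l := by
  have hsub : (Qmap d l ba).support ⊆
      (Finset.univ.image (fun i : Fin (l - 1) => (i : ℕ))) ∪
        (Finset.univ.image (fun i : Fin l => d - l + 1 + (i : ℕ))) := by
    intro k hk
    rw [Polynomial.mem_support_iff] at hk
    by_contra hmem
    simp only [Finset.mem_union, Finset.mem_image, Finset.mem_univ, true_and, not_or,
      not_exists] at hmem
    apply hk
    simp only [Qmap, LinearMap.coe_mk, AddHom.coe_mk, coeff_add, finset_sum_coeff,
      coeff_C_mul, coeff_X_pow]
    rw [Finset.sum_eq_zero, Finset.sum_eq_zero, add_zero]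
    · intro i _
      have : k ≠ d - l + 1 + (i : ℕ) := fun h => hmem.2 i h.symm
      simp [this]
    · intro i _
      have : k ≠ (i : ℕ) := fun h => hmem.1 i h.symm
      simp [this]
  calc (Qmap d l ba).support.card
      ≤ _ := Finset.card_le_card hsub
    _ ≤ _ := Finset.card_union_le _ _
    _ ≤ (l - 1) + l := by
        gcongr <;> exact (Finset.card_image_le).trans (by simp)

/-- If `(X-1)^(2l-1)` divides `Qmap d l ba` then `ba = 0`. -/
lemma Qmap_eq_zero_of_dvd (d l : ℕ) (hl : 2 ≤ l) (hdl : 3 * l - 2 ≤ d)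
    (ba : (Fin (l - 1) → ℂ) × (Fin l → ℂ))
    (h : ((X : ℂ[X]) - 1) ^ (2 * l - 1) ∣ Qmap d l ba) : ba = 0 := by
  have hz : Qmap d l ba = 0 := by
    by_contra h0
    have h1 : 2 * l - 1 ≤ (Qmap d l ba).rootMultiplicity 1 := by
      apply (Polynomial.le_rootMultiplicity_iff h0).mpr
      simpa using h
    have h2 := rootMultiplicity_one_lt_card_support (Qmap d l ba) h0
    have h3 := Qmap_card_support d l ba
    omega
  ext j
  · have := Qmap_coeff_lt d l hl hdl ba j
    rw [hz] at this
    simpa using this.symm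
  · have := Qmap_coeff_ge d l hl hdl ba j
    rw [hz] at this
    simpa using this.symm

theorem exists_unique_coefficients (d l : ℕ) (hd : 4 ≤ d) (hl : 2 ≤ l)
    (hdl : 3 * l - 2 ≤ d) :
    ∃! ba : (Fin (l - 1) → ℂ) × (Fin l → ℂ),
      ((X : ℂ[X]) - 1) ^ (2 * l - 1) ∣
        (∑ i : Fin (l - 1), C (ba.1 i) * X ^ (i : ℕ)) + X ^ (l - 1) +
          ∑ i : Fin l, C (ba.2 i) * X ^ (d - l + 1 + (i : ℕ)) := by
  set M : ℂ[X] := ((X : ℂ[X]) - 1) ^ (2 * l - 1) with hM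
  have hMC : M = (X - C (1 : ℂ)) ^ (2 * l - 1) := by simp [hM]
  have hMmonic : M.Monic := by rw [hMC]; exact (monic_X_sub_C 1).pow _
  have hMdeg : M.degree = (2 * l - 1 : ℕ) := by
    rw [hMC, degree_pow, degree_X_sub_C, nsmul_eq_mul, mul_one]
  -- the main linear map into polynomials of degree < 2l-1
  set T : ((Fin (l - 1) → ℂ) × (Fin l → ℂ)) →ₗ[ℂ] degreeLT ℂ (2 * l - 1) :=
    LinearMap.codRestrict (degreeLT ℂ (2 * l - 1))
      ((modByMonicHom M).comp (Qmap d l))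
      (fun ba => by
        rw [mem_degreeLT, ← hMdeg]
        exact degree_modByMonic_lt _ hMmonic) with hT
  have hTapp : ∀ ba, (T ba : ℂ[X]) = (Qmap d l ba) %ₘ M := fun ba => rfl
  have hTinj : Function.Injective T := by
    rw [← LinearMap.ker_eq_bot]
    rw [LinearMap.ker_eq_bot']
    intro ba hba
    have h1 : (Qmap d l ba) %ₘ M = 0 := by
      have := congrArg (Subtype.val) hba
      rwa [hTapp] at this
    have h2 : M ∣ Qmap d l ba := (modByMonic_eq_zero_iff_dvd hMmonic).mp h1
    exact Qmap_eq_zero_of_dvd d l hl hdl ba (hM ▸ h2)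
  have hfr1 : Module.finrank ℂ ((Fin (l - 1) → ℂ) × (Fin l → ℂ)) = (l - 1) + l := by
    rw [Module.finrank_prod, Module.finrank_fin_fun, Module.finrank_fin_fun]
  have hfd : FiniteDimensional ℂ (degreeLT ℂ (2 * l - 1)) :=
    Module.Finite.equiv (degreeLTEquiv ℂ (2 * l - 1)).symm
  have hfr2 : Module.finrank ℂ (degreeLT ℂ (2 * l - 1)) = 2 * l - 1 := by
    rw [(degreeLTEquiv ℂ (2 * l - 1)).finrank_eq, Module.finrank_fin_fun]
  have hTsurj : Function.Surjective T := by
    rw [← LinearMap.injective_iff_surjective_of_finrank_eq_finrank (by rw [hfr1, hfr2]; omega)]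
    exact hTinj
  -- the target: -(X^(l-1) %ₘ M)
  have htmem : -((X : ℂ[X]) ^ (l - 1) %ₘ M) ∈ degreeLT ℂ (2 * l - 1) := by
    rw [mem_degreeLT, degree_neg, ← hMdeg]
    exact degree_modByMonic_lt _ hMmonic
  obtain ⟨ba, hba⟩ := hTsurj ⟨-((X : ℂ[X]) ^ (l - 1) %ₘ M), htmem⟩
  have hba' : (Qmap d l ba) %ₘ M = -((X : ℂ[X]) ^ (l - 1) %ₘ M) := by
    have := congrArg Subtype.val hba
    rwa [hTapp] at this
  have key : ∀ ba' : (Fin (l - 1) → ℂ) × (Fin l → ℂ),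
      (∑ i : Fin (l - 1), C (ba'.1 i) * X ^ (i : ℕ)) + X ^ (l - 1) +
          (∑ i : Fin l, C (ba'.2 i) * X ^ (d - l + 1 + (i : ℕ)))
        = Qmap d l ba' + X ^ (l - 1) := by
    intro ba'
    simp only [Qmap, LinearMap.coe_mk, AddHom.coe_mk]
    ring
  refine ⟨ba, ?_, ?_⟩
  · dsimp only
    rw [key]
    rw [← modByMonic_eq_zero_iff_dvd hMmonic]
    rw [add_modByMonic, hba', neg_add_cancel]
  · intro ba' hdvd'
    beta_reduce at hdvd'
    have hdvd : M ∣ Qmap d l ba + X ^ (l - 1) := by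
      rw [← modByMonic_eq_zero_iff_dvd hMmonic, add_modByMonic, hba', neg_add_cancel]
    rw [key] at hdvd'
    have hsub : M ∣ Qmap d l (ba' - ba) := by
      rw [map_sub]
      have := dvd_sub hdvd' hdvd
      simpa using this
    have := Qmap_eq_zero_of_dvd d l hl hdl _ (hM ▸ hsub)
    have h0 : ba' - ba = 0 := this
    rw [sub_eq_zero] at h0
    exact h0
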